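/- Let c^A, c^D ∈ (0,∞) and let f : ℝ³ → ℝ be twice continuously differentiable. For N ∈ ℕ and integers i, j, k with 1 ≤ k ≤ N, 0 ≤ i ≤ k and 0 ≤ j ≤ N − k, define (G^N f)(i,j,k) = N (k−i)(i/k)[ f((i+1)/N, j/N, k/N) − f(i/N, j/N, k/N) ] + N i((k−i)/k)[ f((i−1)/N, j/N, k/N) − f(i/N, j/N, k/N) ] + c^A i [ f((i−1)/N, (j+1)/N, (k−1)/N) − f(i/N, j/N, k/N) ] + c^D j [ f((i+1)/N, (j−1)/N, (k+1)/N) − f(i/N, j/N, k/N) ] + c^A (k−i)[ f(i/N, j/N, (k−1)/N) − f(i/N, j/N, k/N) ] + c^D (N−k−j)[ f(i/N, j/N, (k+1)/N) − f(i/N, j/N, k/N) ]. Suppose (i_N), (j_N), (k_N) are integer sequences satisfying these constraints with i_N/N → x, j_N/N → y, k_N/N → z as N → ∞, where z > 0. Then lim_{N→∞} (G^N f)(i_N, j_N, k_N) = (x(z−x)/z) ∂²f/∂x²(x,y,z) + (c^D y − c^A x) ∂f/∂x(x,y,z) + (c^A x − c^D y) ∂f/∂y(x,y,z) + (c^D(1−z)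 − c^A z) ∂f/∂z(x,y,z). -/

import Mathlib

open Filter Real

set_option maxHeartbeats 1000000

/-- Uniform mean-value estimate near a point of continuity of the derivative. -/
lemma moran_uest {E F : Type*} [NormedAddCommGroup E] [NormedSpace ℝ E]
    [NormedAddCommGroup F] [NormedSpace ℝ F] {f : E → F}
    (hd : Differentiable ℝ f) {p : E} (hc : ContinuousAt (fderiv ℝ f) p)
    {ε : ℝ} (hε : 0 < ε) :
    ∃ δ > 0, ∀ a ∈ Metric.ball p δ, ∀ b ∈ Metric.ball p δ,
      ‖f b - f a - fderiv ℝ f p (b - a)‖ ≤ ε * ‖b - a‖ := by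
  have h := Metric.continuousAt_iff.1 hc ε hε
  obtain ⟨δ, hδ, hδ'⟩ := h
  refine ⟨δ, hδ, fun a ha b hb => ?_⟩
  have key : ∀ q ∈ Metric.ball p δ, ‖fderiv ℝ f q - fderiv ℝ f p‖ ≤ ε := by
    intro q hq
    have := hδ' (Metric.mem_ball.1 hq)
    rw [dist_eq_norm] at this
    exact this.le
  have hmv := (convex_ball p δ).norm_image_sub_le_of_norm_hasFDerivWithin_le
    (f := fun q => f q - fderiv ℝ f p q)
    (f' := fun q => fderiv ℝ f q - fderiv ℝ f p)
    (fun q _ => (((hd q).hasFDerivAt).sub ((fderiv ℝ f p).hasFDerivAt)).hasFDerivWithinAt)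
    key ha hb
  have : f b - fderiv ℝ f p b - (f a - fderiv ℝ f p a) = f b - f a - fderiv ℝ f p (b - a) := by
    rw [map_sub]; abel
  rwa [this] at hmv

/-- First-order limit: moving base point difference quotient converges. -/
lemma moran_key1 {E F : Type*} [NormedAddCommGroup E] [NormedSpace ℝ E]
    [NormedAddCommGroup F] [NormedSpace ℝ F] (f : E → F)
    (hd : Differentiable ℝ f) {p : E} (hc : ContinuousAt (fderiv ℝ f) p)
    (a : ℕ → E) (ha : Tendsto a atTop (nhds p)) (v : E) :
    Tendsto (fun n : ℕ => (n : ℝ) • (f (a n + (n : ℝ)⁻¹ • v) - f (a n))) atTop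
      (nhds (fderiv ℝ f p v)) := by
  rw [Metric.tendsto_atTop]
  intro ε hε
  set A := fderiv ℝ f p with hA
  have hε' : 0 < ε / (2 * (‖v‖ + 1)) := by positivity
  obtain ⟨δ, hδ, hest⟩ := moran_uest hd hc hε'
  have h1 : ∀ᶠ n : ℕ in atTop, dist (a n) p < δ / 2 :=
    (Metric.tendsto_nhds.1 ha) _ (by positivity)
  have h2 : Tendsto (fun n : ℕ => (n : ℝ)⁻¹ * ‖v‖) atTop (nhds 0) := by
    simpa using (tendsto_natCast_atTop_atTop (R := ℝ)).inv_tendsto_atTop.mul_const ‖v‖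
  have h2' : ∀ᶠ n : ℕ in atTop, (n : ℝ)⁻¹ * ‖v‖ < δ / 2 := by
    have := (Metric.tendsto_nhds.1 h2) (δ / 2) (by positivity)
    filter_upwards [this] with n hn
    calc (n : ℝ)⁻¹ * ‖v‖ ≤ |(n : ℝ)⁻¹ * ‖v‖ - 0| := by
          rw [sub_zero]; exact le_abs_self _
      _ < δ / 2 := by rw [← Real.dist_eq]; exact hn
  obtain ⟨N₀, hN₀⟩ := ((h1.and h2').and (eventually_ge_atTop 1)).exists_forall_of_atTop
  refine ⟨N₀, fun n hn => ?_⟩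
  obtain ⟨⟨hd1, hd2⟩, hn1⟩ := hN₀ n hn
  have hnpos : (0 : ℝ) < (n : ℝ) := by exact_mod_cast hn1
  have hn0 : (n : ℝ) ≠ 0 := ne_of_gt hnpos
  have hnormh : ‖(n : ℝ)⁻¹ • v‖ = (n : ℝ)⁻¹ * ‖v‖ := by
    rw [norm_smul, Real.norm_eq_abs, abs_of_nonneg (by positivity)]
  have hmema : a n ∈ Metric.ball p δ := by
    rw [Metric.mem_ball]; linarith
  have hmemb : a n + (n : ℝ)⁻¹ • v ∈ Metric.ball p δ := by
    rw [Metric.mem_ball, dist_eq_norm]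
    calc ‖a n + (n : ℝ)⁻¹ • v - p‖ ≤ ‖a n - p‖ + ‖(n : ℝ)⁻¹ • v‖ := by
          rw [add_sub_right_comm]; exact norm_add_le _ _
      _ < δ / 2 + δ / 2 := by
          rw [hnormh]
          exact add_lt_add (by rw [← dist_eq_norm]; exact hd1) hd2
      _ = δ := by ring
  have hkey := hest (a n) hmema (a n + (n : ℝ)⁻¹ • v) hmemb
  rw [add_sub_cancel_left] at hkey
  rw [dist_eq_norm]
  have heq : (n : ℝ) • (f (a n + (n : ℝ)⁻¹ • v) - f (a n)) - A v
      = (n : ℝ) • (f (a n + (n : ℝ)⁻¹ • v) - f (a n) - A ((n : ℝ)⁻¹ • v)) := by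
    simp [map_smul, smul_sub, smul_smul, mul_inv_cancel₀ hn0]
  rw [heq, norm_smul, Real.norm_eq_abs, abs_of_pos hnpos]
  calc (n : ℝ) * ‖f (a n + (n : ℝ)⁻¹ • v) - f (a n) - A ((n : ℝ)⁻¹ • v)‖
      ≤ (n : ℝ) * (ε / (2 * (‖v‖ + 1)) * ((n : ℝ)⁻¹ * ‖v‖)) := by
        apply mul_le_mul_of_nonneg_left _ (le_of_lt hnpos)
        rw [← hnormh]; exact hkey
    _ = ε / (2 * (‖v‖ + 1)) * ‖v‖ := by field_simp
    _ < ε := by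
        rw [div_mul_eq_mul_div, div_lt_iff₀ (by positivity)]
        nlinarith [norm_nonneg v]

/-- Second-order limit: moving base point second difference quotient converges. -/
lemma moran_key2 {E : Type*} [NormedAddCommGroup E] [NormedSpace ℝ E] (f : E → ℝ)
    (hf : ContDiff ℝ 2 f) {p : E} (a : ℕ → E) (ha : Tendsto a atTop (nhds p)) (v : E) :
    Tendsto (fun n : ℕ => (n : ℝ) ^ 2 *
        (f (a n + (n : ℝ)⁻¹ • v) + f (a n - (n : ℝ)⁻¹ • v) - 2 * f (a n))) atTop
      (nhds (fderiv ℝ (fderiv ℝ f) p v v)) := by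
  set F := fderiv ℝ f with hFdef
  have hF : ContDiff ℝ 1 F := hf.fderiv_right (by norm_num)
  have hFd : Differentiable ℝ F := hF.differentiable (by norm_num)
  have hFc : ContinuousAt (fderiv ℝ F) p := (hF.continuous_fderiv (by norm_num)).continuousAt
  have hfd : Differentiable ℝ f := hf.differentiable (by norm_num)
  set B := fderiv ℝ F p with hBdef
  rw [Metric.tendsto_atTop]
  intro ε hε
  have hε' : 0 < ε / (4 * (‖v‖ ^ 2 + 1)) := by positivity
  set ε' := ε / (4 * (‖v‖ ^ 2 + 1)) with hε'def
  obtain ⟨δ, hδ, hest⟩ := moran_uest hFd hFc hε'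
  have h1 : ∀ᶠ n : ℕ in atTop, dist (a n) p < δ / 2 :=
    (Metric.tendsto_nhds.1 ha) _ (by positivity)
  have h2 : Tendsto (fun n : ℕ => (n : ℝ)⁻¹ * ‖v‖) atTop (nhds 0) := by
    simpa using (tendsto_natCast_atTop_atTop (R := ℝ)).inv_tendsto_atTop.mul_const ‖v‖
  have h2' : ∀ᶠ n : ℕ in atTop, (n : ℝ)⁻¹ * ‖v‖ < δ / 2 := by
    have := (Metric.tendsto_nhds.1 h2) (δ / 2) (by positivity)
    filter_upwards [this] with n hn
    calc (n : ℝ)⁻¹ * ‖v‖ ≤ |(n : ℝ)⁻¹ * ‖v‖ - 0| := by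
          rw [sub_zero]; exact le_abs_self _
      _ < δ / 2 := by rw [← Real.dist_eq]; exact hn
  obtain ⟨N₀, hN₀⟩ := ((h1.and h2').and (eventually_ge_atTop 1)).exists_forall_of_atTop
  refine ⟨N₀, fun n hn => ?_⟩
  obtain ⟨⟨hd1, hd2⟩, hn1⟩ := hN₀ n hn
  have hnpos : (0 : ℝ) < (n : ℝ) := by exact_mod_cast hn1
  have hn0 : (n : ℝ) ≠ 0 := ne_of_gt hnpos
  set h : E := (n : ℝ)⁻¹ • v with hhdef
  have hnormh : ‖h‖ = (n : ℝ)⁻¹ * ‖v‖ := by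
    rw [hhdef, norm_smul, Real.norm_eq_abs, abs_of_nonneg (by positivity)]
  have hmem : ∀ t ∈ Set.Icc (0 : ℝ) 1, ∀ s : ℝ, |s| ≤ 1 →
      a n + (s * t) • h ∈ Metric.ball p δ := by
    intro t ht s hs
    rw [Metric.mem_ball, dist_eq_norm]
    calc ‖a n + (s * t) • h - p‖ ≤ ‖a n - p‖ + ‖(s * t) • h‖ := by
          rw [add_sub_right_comm]; exact norm_add_le _ _
      _ < δ / 2 + δ / 2 := by
          refine add_lt_add (by rw [← dist_eq_norm]; exact hd1) ?_
          rw [norm_smul, Real.norm_eq_abs, abs_mul, abs_of_nonneg ht.1]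
          calc |s| * t * ‖h‖ ≤ 1 * 1 * ‖h‖ := by
                apply mul_le_mul_of_nonneg_right _ (norm_nonneg h)
                exact mul_le_mul hs ht.2 ht.1 zero_le_one
            _ = ‖h‖ := by ring_nf
            _ < δ / 2 := by rw [hnormh]; exact hd2
      _ = δ := by ring
  -- the 1-D function
  set ψ : ℝ → ℝ := fun t => f (a n + t • h) + f (a n - t • h) - t ^ 2 * (B h h) with hψdef
  set ψ' : ℝ → ℝ := fun t =>
    F (a n + t • h) h + F (a n - t • h) (-h) - 2 * t * (B h h) with hψ'def
  have hderiv : ∀ t : ℝ, HasDerivAt ψ (ψ' t) t := by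
    intro t
    have c₁ : HasDerivAt (fun t : ℝ => a n + t • h) h t := by
      simpa using ((hasDerivAt_id t).smul_const h).const_add (a n)
    have c₂ : HasDerivAt (fun t : ℝ => a n - t • h) (-h) t := by
      simpa using ((hasDerivAt_id t).smul_const h).const_sub (a n)
    have d₁ : HasDerivAt (fun t : ℝ => f (a n + t • h)) (F (a n + t • h) h) t :=
      ((hfd _).hasFDerivAt).comp_hasDerivAt t c₁
    have d₂ : HasDerivAt (fun t : ℝ => f (a n - t • h)) (F (a n - t • h) (-h)) t :=
      ((hfd _).hasFDerivAt).comp_hasDerivAt t c₂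
    have d₃ : HasDerivAt (fun t : ℝ => t ^ 2 * (B h h)) (2 * t * (B h h)) t := by
      simpa using (hasDerivAt_pow 2 t).mul_const (B h h)
    exact (d₁.add d₂).sub d₃
  have hbound : ∀ t ∈ Set.Icc (0 : ℝ) 1, ‖ψ' t‖ ≤ 2 * ε' * ‖h‖ ^ 2 := by
    intro t ht
    have hm₁ : a n + t • h ∈ Metric.ball p δ := by
      have := hmem t ht 1 (by norm_num)
      simpa using this
    have hm₂ : a n - t • h ∈ Metric.ball p δ := by
      have := hmem t ht (-1) (by norm_num)
      simpa [neg_smul, sub_eq_add_neg] using this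
    have hkey := hest (a n - t • h) hm₂ (a n + t • h) hm₁
    have hdiff : a n + t • h - (a n - t • h) = (2 * t) • h := by
      rw [two_mul, add_smul]; abel
    rw [hdiff] at hkey
    have heq : ψ' t = (F (a n + t • h) - F (a n - t • h) - B ((2 * t) • h)) h := by
      simp [hψ'def, map_smul, smul_eq_mul]
      ring
    rw [heq]
    calc ‖(F (a n + t • h) - F (a n - t • h) - B ((2 * t) • h)) h‖
        ≤ ‖F (a n + t • h) - F (a n - t • h) - B ((2 * t) • h)‖ * ‖h‖ :=
          ContinuousLinearMap.le_opNorm _ _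
      _ ≤ ε' * ‖(2 * t) • h‖ * ‖h‖ :=
          mul_le_mul_of_nonneg_right hkey (norm_nonneg h)
      _ ≤ 2 * ε' * ‖h‖ ^ 2 := by
          rw [norm_smul, Real.norm_eq_abs, abs_of_nonneg (by linarith [ht.1])]
          have h1t : (0 : ℝ) ≤ 1 - t := by linarith [ht.2]
          nlinarith [mul_nonneg (mul_nonneg hε'.le (sq_nonneg ‖h‖)) h1t, sq_nonneg ‖h‖,
            norm_nonneg h, hε'.le, ht.1]
  have hmv := Convex.norm_image_sub_le_of_norm_hasDerivWithin_le
    (f := ψ) (f' := ψ') (s := Set.Icc (0 : ℝ) 1)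
    (fun t _ => (hderiv t).hasDerivWithinAt) hbound (convex_Icc 0 1)
    (Set.left_mem_Icc.2 zero_le_one) (Set.right_mem_Icc.2 zero_le_one)
  have hψval : ψ 1 - ψ 0 = f (a n + h) + f (a n - h) - 2 * f (a n) - B h h := by
    simp [hψdef]
    ring
  rw [hψval] at hmv
  simp only [norm_one, sub_zero, mul_one] at hmv
  have hBhh : B h h = (n : ℝ)⁻¹ * ((n : ℝ)⁻¹ * (B v v)) := by
    rw [hhdef, map_smul, map_smul]
    simp [smul_eq_mul]
  rw [dist_eq_norm]
  have heq2 : (n : ℝ) ^ 2 * (f (a n + (n : ℝ)⁻¹ • v) + f (a n - (n : ℝ)⁻¹ • v)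
      - 2 * f (a n)) - B v v
      = (n : ℝ) ^ 2 * (f (a n + h) + f (a n - h) - 2 * f (a n) - B h h) := by
    rw [hBhh, hhdef]
    field_simp
  rw [heq2, Real.norm_eq_abs, abs_mul, abs_of_nonneg (by positivity)]
  calc (n : ℝ) ^ 2 * |f (a n + h) + f (a n - h) - 2 * f (a n) - B h h|
      ≤ (n : ℝ) ^ 2 * (2 * ε' * ‖h‖ ^ 2) := by
        apply mul_le_mul_of_nonneg_left _ (by positivity)
        rw [← Real.norm_eq_abs]; exact hmv
    _ = 2 * ε' * ‖v‖ ^ 2 := by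
        rw [hnormh]
        field_simp
    _ < ε := by
        rw [hε'def, show (2 : ℝ) * (ε / (4 * (‖v‖ ^ 2 + 1))) * ‖v‖ ^ 2
          = ε * (2 * ‖v‖ ^ 2) / (4 * (‖v‖ ^ 2 + 1)) by ring,
          div_lt_iff₀ (by positivity)]
        nlinarith [mul_nonneg hε.le (sq_nonneg ‖v‖), hε, sq_nonneg ‖v‖]


/-- Appendix B.1 (eqs. (B.5)–(B.7)): convergence of the generators of the sped-up Moran
model with one-colour seed-bank to the generator of the limiting diffusion. For twice
continuously differentiable `f` and integer sequences `(i_N, j_N, k_N)` with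
`1 ≤ k_N ≤ N`, `i_N ≤ k_N`, `j_N ≤ N - k_N` and `i_N/N → x`, `j_N/N → y`, `k_N/N → z > 0`,
`(G^N f)(i_N, j_N, k_N)` converges to
`(x(z-x)/z) ∂²f/∂x² + (c^D y - c^A x) ∂f/∂x + (c^A x - c^D y) ∂f/∂y
  + (c^D(1-z) - c^A z) ∂f/∂z` evaluated at `(x,y,z)`. -/
theorem moran_generator_convergence
    (cA cD : ℝ) (hcA : 0 < cA) (hcD : 0 < cD)
    (f : ℝ × ℝ × ℝ → ℝ) (hf : ContDiff ℝ 2 f)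
    (GN : ℕ → ℕ → ℕ → ℕ → ℝ)
    (hGN : ∀ N i j k : ℕ, GN N i j k =
        (N : ℝ) * ((k : ℝ) - (i : ℝ)) * ((i : ℝ) / (k : ℝ)) *
          (f (((i : ℝ) + 1) / N, (j : ℝ) / N, (k : ℝ) / N)
            - f ((i : ℝ) / N, (j : ℝ) / N, (k : ℝ) / N))
      + (N : ℝ) * (i : ℝ) * (((k : ℝ) - (i : ℝ)) / (k : ℝ)) *
          (f (((i : ℝ) - 1) / N, (j : ℝ) / N, (k : ℝ) / N)
            - f ((i : ℝ) / N, (j : ℝ) / N, (k : ℝ) / N))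
      + cA * (i : ℝ) *
          (f (((i : ℝ) - 1) / N, ((j : ℝ) + 1) / N, ((k : ℝ) - 1) / N)
            - f ((i : ℝ) / N, (j : ℝ) / N, (k : ℝ) / N))
      + cD * (j : ℝ) *
          (f (((i : ℝ) + 1) / N, ((j : ℝ) - 1) / N, ((k : ℝ) + 1) / N)
            - f ((i : ℝ) / N, (j : ℝ) / N, (k : ℝ) / N))
      + cA * ((k : ℝ) - (i : ℝ)) *
          (f ((i : ℝ) / N, (j : ℝ) / N, ((k : ℝ) - 1) / N)
            - f ((i : ℝ) / N, (j : ℝ) / N, (k : ℝ) / N))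
      + cD * ((N : ℝ) - (k : ℝ) - (j : ℝ)) *
          (f ((i : ℝ) / N, (j : ℝ) / N, ((k : ℝ) + 1) / N)
            - f ((i : ℝ) / N, (j : ℝ) / N, (k : ℝ) / N)))
    (iN jN kN : ℕ → ℕ)
    (hcon : ∀ N : ℕ, 1 ≤ N →
      1 ≤ kN N ∧ kN N ≤ N ∧ iN N ≤ kN N ∧ jN N ≤ N - kN N)
    (x y z : ℝ) (hz : 0 < z)
    (hx : Tendsto (fun N : ℕ => (iN N : ℝ) / N) atTop (nhds x))
    (hy : Tendsto (fun N : ℕ => (jN N : ℝ) / N) atTop (nhds y))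
    (hzc : Tendsto (fun N : ℕ => (kN N : ℝ) / N) atTop (nhds z)) :
    Tendsto (fun N : ℕ => GN N (iN N) (jN N) (kN N)) atTop
      (nhds
        ((x * (z - x) / z) * deriv (deriv fun u : ℝ => f (u, y, z)) x
          + (cD * y - cA * x) * deriv (fun u : ℝ => f (u, y, z)) x
          + (cA * x - cD * y) * deriv (fun v : ℝ => f (x, v, z)) y
          + (cD * (1 - z) - cA * z) * deriv (fun w : ℝ => f (x, y, w)) z)) := by
  have hfd : Differentiable ℝ f := hf.differentiable (by norm_num)
  have hfc : ContinuousAt (fderiv ℝ f) (x, y, z) :=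
    (hf.continuous_fderiv (by norm_num)).continuousAt
  have hFcd : ContDiff ℝ 1 (fderiv ℝ f) := hf.fderiv_right (by norm_num)
  have hFd : Differentiable ℝ (fderiv ℝ f) := hFcd.differentiable (by norm_num)
  set e1 : ℝ × ℝ × ℝ := (1, 0, 0) with he1
  set e2 : ℝ × ℝ × ℝ := (0, 1, 0) with he2
  set e3 : ℝ × ℝ × ℝ := (0, 0, 1) with he3
  set A : (ℝ × ℝ × ℝ) →L[ℝ] ℝ := fderiv ℝ f (x, y, z) with hA
  set B := fderiv ℝ (fderiv ℝ f) (x, y, z) with hB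
  -- derivative identities
  have hι1 : ∀ u : ℝ, HasDerivAt (fun u : ℝ => ((u, y, z) : ℝ × ℝ × ℝ)) e1 u := fun u =>
    HasDerivAt.prodMk (hasDerivAt_id u) (HasDerivAt.prodMk (hasDerivAt_const u y) (hasDerivAt_const u z))
  have hι2 : HasDerivAt (fun v : ℝ => ((x, v, z) : ℝ × ℝ × ℝ)) e2 y :=
    HasDerivAt.prodMk (hasDerivAt_const y x) (HasDerivAt.prodMk (hasDerivAt_id y) (hasDerivAt_const y z))
  have hι3 : HasDerivAt (fun w : ℝ => ((x, y, w) : ℝ × ℝ × ℝ)) e3 z :=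
    HasDerivAt.prodMk (hasDerivAt_const z x) (HasDerivAt.prodMk (hasDerivAt_const z y) (hasDerivAt_id z))
  have hd1 : ∀ u : ℝ, HasDerivAt (fun u : ℝ => f (u, y, z)) (fderiv ℝ f (u, y, z) e1) u :=
    fun u => ((hfd _).hasFDerivAt).comp_hasDerivAt u (hι1 u)
  have h1 : deriv (fun u : ℝ => f (u, y, z)) x = A e1 := (hd1 x).deriv
  have h2 : deriv (fun v : ℝ => f (x, v, z)) y = A e2 :=
    (((hfd _).hasFDerivAt).comp_hasDerivAt y hι2).deriv
  have h3 : deriv (fun w : ℝ => f (x, y, w)) z = A e3 :=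
    (((hfd _).hasFDerivAt).comp_hasDerivAt z hι3).deriv
  have h4 : deriv (deriv fun u : ℝ => f (u, y, z)) x = B e1 e1 := by
    have hderiv_eq : (deriv fun u : ℝ => f (u, y, z)) = fun u => fderiv ℝ f (u, y, z) e1 :=
      funext fun u => (hd1 u).deriv
    rw [hderiv_eq]
    have hdF : HasDerivAt (fun u : ℝ => fderiv ℝ f (u, y, z))
        (fderiv ℝ (fderiv ℝ f) (x, y, z) e1) x :=
      ((hFd _).hasFDerivAt).comp_hasDerivAt x (hι1 x)
    exact ((ContinuousLinearMap.apply ℝ ℝ e1).hasFDerivAt.comp_hasDerivAt x hdF).deriv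
  -- limit pieces
  have hpN : Tendsto (fun N : ℕ => (((iN N : ℝ) / N, (jN N : ℝ) / N, (kN N : ℝ) / N) : ℝ × ℝ × ℝ))
      atTop (nhds (x, y, z)) := hx.prodMk_nhds (hy.prodMk_nhds hzc)
  set pN : ℕ → ℝ × ℝ × ℝ := fun N => ((iN N : ℝ) / N, (jN N : ℝ) / N, (kN N : ℝ) / N) with hpNdef
  set v1 : ℝ × ℝ × ℝ := (-1, 1, -1) with hv1
  set v2 : ℝ × ℝ × ℝ := (1, -1, 1) with hv2
  have T2 := moran_key2 f hf pN hpN e1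
  have Tv1 := moran_key1 f hfd hfc pN hpN v1
  have Tv2 := moran_key1 f hfd hfc pN hpN v2
  have Tv3 := moran_key1 f hfd hfc pN hpN (-e3)
  have Tv4 := moran_key1 f hfd hfc pN hpN e3
  have C2 : Tendsto (fun N : ℕ => ((iN N : ℝ) / N) * ((kN N : ℝ) / N - (iN N : ℝ) / N)
      / ((kN N : ℝ) / N)) atTop (nhds (x * (z - x) / z)) :=
    (hx.mul (hzc.sub hx)).div hzc (ne_of_gt hz)
  have hST : Tendsto (fun N : ℕ =>
      (((iN N : ℝ) / N) * ((kN N : ℝ) / N - (iN N : ℝ) / N) / ((kN N : ℝ) / N)) *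
        ((N : ℝ) ^ 2 * (f (pN N + (N : ℝ)⁻¹ • e1) + f (pN N - (N : ℝ)⁻¹ • e1) - 2 * f (pN N)))
      + (cA * ((iN N : ℝ) / N)) * ((N : ℝ) • (f (pN N + (N : ℝ)⁻¹ • v1) - f (pN N)))
      + (cD * ((jN N : ℝ) / N)) * ((N : ℝ) • (f (pN N + (N : ℝ)⁻¹ • v2) - f (pN N)))
      + (cA * ((kN N : ℝ) / N - (iN N : ℝ) / N)) *
          ((N : ℝ) • (f (pN N + (N : ℝ)⁻¹ • (-e3)) - f (pN N)))
      + (cD * (1 - (kN N : ℝ) / N - (jN N : ℝ) / N)) *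
          ((N : ℝ) • (f (pN N + (N : ℝ)⁻¹ • e3) - f (pN N)))) atTop
      (nhds ((x * (z - x) / z) * (B e1 e1) + (cA * x) * (A v1) + (cD * y) * (A v2)
        + (cA * (z - x)) * (A (-e3)) + (cD * (1 - z - y)) * (A e3))) := by
    exact ((((C2.mul T2).add ((hx.const_mul cA).mul Tv1)).add
      ((hy.const_mul cD).mul Tv2)).add
      (((hzc.sub hx).const_mul cA).mul Tv3)).add
      ((((tendsto_const_nhds.sub hzc).sub hy).const_mul cD).mul Tv4)
  -- identify the limits
  have hAv1 : A v1 = -(A e1) + A e2 - A e3 := by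
    have : v1 = -e1 + e2 - e3 := by
      rw [hv1, he1, he2, he3]; norm_num [Prod.ext_iff]
    rw [this, map_sub, map_add, map_neg]
  have hAv2 : A v2 = A e1 - A e2 + A e3 := by
    have : v2 = e1 - e2 + e3 := by
      rw [hv2, he1, he2, he3]; norm_num [Prod.ext_iff]
    rw [this, map_add, map_sub]
  have hAv3 : A (-e3) = -(A e3) := by rw [map_neg]
  rw [h1, h2, h3, h4]
  have hLeq : (x * (z - x) / z) * (B e1 e1) + (cA * x) * (A v1) + (cD * y) * (A v2)
        + (cA * (z - x)) * (A (-e3)) + (cD * (1 - z - y)) * (A e3)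
      = x * (z - x) / z * (B e1 e1) + (cD * y - cA * x) * (A e1)
        + (cA * x - cD * y) * (A e2) + (cD * (1 - z) - cA * z) * (A e3) := by
    rw [hAv1, hAv2, hAv3]; ring
  rw [← hLeq]
  refine Tendsto.congr' ?_ hST
  filter_upwards [eventually_ge_atTop 1] with N hN
  obtain ⟨hk1, hkN, hik, hjk⟩ := hcon N hN
  have hN0 : (N : ℝ) ≠ 0 := Nat.cast_ne_zero.2 (by omega)
  have hk0 : (kN N : ℝ) ≠ 0 := Nat.cast_ne_zero.2 (by omega)
  rw [hGN]
  have hpt : ∀ d e g : ℝ, pN N + (N : ℝ)⁻¹ • ((d, e, g) : ℝ × ℝ × ℝ)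
      = (((iN N : ℝ) + d) / N, ((jN N : ℝ) + e) / N, ((kN N : ℝ) + g) / N) := by
    intro d e g
    rw [hpNdef]
    refine Prod.ext ?_ (Prod.ext ?_ ?_) <;> simp <;> ring
  have E1 : pN N + (N : ℝ)⁻¹ • e1
      = (((iN N : ℝ) + 1) / N, (jN N : ℝ) / N, (kN N : ℝ) / N) := by
    rw [he1, hpt]; norm_num
  have E1' : pN N - (N : ℝ)⁻¹ • e1
      = (((iN N : ℝ) - 1) / N, (jN N : ℝ) / N, (kN N : ℝ) / N) := by
    rw [sub_eq_add_neg, ← smul_neg, show -e1 = ((-1 : ℝ), (0 : ℝ), (0 : ℝ)) by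
      rw [he1]; norm_num [Prod.ext_iff], hpt]
    norm_num [sub_eq_add_neg]
  have E2 : pN N + (N : ℝ)⁻¹ • v1
      = (((iN N : ℝ) - 1) / N, ((jN N : ℝ) + 1) / N, ((kN N : ℝ) - 1) / N) := by
    rw [hv1, hpt]; norm_num [sub_eq_add_neg]
  have E3 : pN N + (N : ℝ)⁻¹ • v2
      = (((iN N : ℝ) + 1) / N, ((jN N : ℝ) - 1) / N, ((kN N : ℝ) + 1) / N) := by
    rw [hv2, hpt]; norm_num [sub_eq_add_neg]
  have E4 : pN N + (N : ℝ)⁻¹ • (-e3)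
      = ((iN N : ℝ) / N, (jN N : ℝ) / N, ((kN N : ℝ) - 1) / N) := by
    rw [show -e3 = ((0 : ℝ), (0 : ℝ), (-1 : ℝ)) by rw [he3]; norm_num [Prod.ext_iff], hpt]
    norm_num [sub_eq_add_neg]
  have E5 : pN N + (N : ℝ)⁻¹ • e3
      = ((iN N : ℝ) / N, (jN N : ℝ) / N, ((kN N : ℝ) + 1) / N) := by
    rw [he3, hpt]; norm_num
  have E0 : pN N = ((iN N : ℝ) / N, (jN N : ℝ) / N, (kN N : ℝ) / N) := by rw [hpNdef]
  rw [E1, E1', E2, E3, E4, E5, E0, smul_eq_mul, smul_eq_mul, smul_eq_mul, smul_eq_mul]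
  field_simp
  ring
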